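/- arXiv:2504.17147 — 3 statements merged into one kernel-verified Lean document; each statement's English description precedes it below -/
import Mathlib

section
/- Let Θ be a measurable space with σ-finite measure μ, and let π, π̂, q(·|·) be strictly positive measurable functions with q symmetric (q(θ*|θ) = q(θ|θ*)). Define α₁(θ→θ*) = min{1, π̂(θ*)/π̂(θ)} and α₂(θ→θ*) = min{1, π(θ*)π̂(θ)/(π(θ)π̂(θ*))}. Then for all θ, θ*: π(θ) q(θ*|θ) α₁(θ→θ*) α₂(θ→θ*) = π(θ*) q(θ|θ*) α₁(θ*→θ) α₂(θ*→θ). -/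
open MeasureTheory

/-- Pointwise detailed balance for the delayed-acceptance MCMC of Christen and Fox (2005),
with a symmetric proposal `q` (`q θ θ'` is the density of proposing `θ'` from `θ`). -/
theorem stmt_2 {Θ : Type*} [MeasurableSpace Θ] (μ : Measure Θ) [SigmaFinite μ]
    (π πhat : Θ → ℝ) (q : Θ → Θ → ℝ)
    (hπm : Measurable π) (hπhatm : Measurable πhat)
    (hqm : Measurable (Function.uncurry q))
    (hπ : ∀ θ, 0 < π θ) (hπhat : ∀ θ, 0 < πhat θ)
    (hq : ∀ θ θ', 0 < q θ θ') (hqsym : ∀ θ θ', q θ θ' = q θ' θ) :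
    ∀ θ θs : Θ,
      π θ * q θ θs * min 1 (πhat θs / πhat θ)
          * min 1 (π θs * πhat θ / (π θ * πhat θs))
        = π θs * q θs θ * min 1 (πhat θ / πhat θs)
          * min 1 (π θ * πhat θs / (π θs * πhat θ)) := by
  intro θ θs
  have hA := hπ θ
  have hB := hπ θs
  have hC := hπhat θ
  have hD := hπhat θs
  rw [hqsym θ θs]
  set A := π θ
  set B := π θs
  set C := πhat θ
  set D := πhat θs
  have hAD : 0 < A * D := by positivity
  have hBC : 0 < B * C := by positivity
  rcases le_total D C with h1 | h1 <;> rcases le_total (A * D) (B * C) with h2 | h2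
  · rw [min_eq_right ((div_le_one hC).mpr h1), min_eq_left ((one_le_div hD).mpr h1),
        min_eq_left ((one_le_div hAD).mpr h2), min_eq_right ((div_le_one hBC).mpr h2)]
    field_simp
  · rw [min_eq_right ((div_le_one hC).mpr h1), min_eq_left ((one_le_div hD).mpr h1),
        min_eq_right ((div_le_one hAD).mpr h2), min_eq_left ((one_le_div hBC).mpr h2)]
    field_simp
  · rw [min_eq_left ((one_le_div hC).mpr h1), min_eq_right ((div_le_one hD).mpr h1),
        min_eq_left ((one_le_div hAD).mpr h2), min_eq_right ((div_le_one hBC).mpr h2)]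
    field_simp
  · rw [min_eq_left ((one_le_div hC).mpr h1), min_eq_right ((div_le_one hD).mpr h1),
        min_eq_right ((div_le_one hAD).mpr h2), min_eq_left ((one_le_div hBC).mpr h2)]
    field_simp
end

section
/- Let h : Θ × X → ℝ be strictly positive with Z(θ) = ∫_X h(θ, y) dν(y) finite, let p : Θ → ℝ and q : Θ × Θ → ℝ be strictly positive, and define the exchange acceptance probability α(θ, θ*, y) = min{1, [p(θ*) h(θ*, x) h(θ, y) q(θ*, θ)] / [p(θ) h(θ, x) h(θ*, y) q(θ, θ*)]} for fixed data x. Then π(θ) q(θ, θ*) ∫_X α(θ, θ*, y) (h(θ*, y)/Z(θ*)) dν(y) = π(θ*) q(θ*, θ) ∫_X α(θ*, θ, y) (h(θ, y)/Z(θ)) dν(y), where π(θ) = p(θ) h(θ, x)/Z(θ). -/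
open MeasureTheory

lemma min_one_div_eq {a b : ℝ} (hb : 0 < b) : min 1 (a / b) = min b a / b := by
  rw [show (1:ℝ) = b / b from (div_self hb.ne').symm, min_div_div_right hb.le]

/-- Detailed balance of the exchange algorithm (Murray et al. 2006) with respect to the
doubly intractable posterior `π(θ) = p(θ) h(θ, x) / Z(θ)`, after averaging over the
auxiliary variable `y ~ h(θ*, ·)/Z(θ*)`. Here `q θ θ'` denotes `q(θ' | θ)`. -/
theorem stmt_3 {Θ X : Type*} [MeasurableSpace X] (ν : Measure X)
    (h : Θ → X → ℝ) (p : Θ → ℝ) (q : Θ → Θ → ℝ) (x : X)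
    (hh : ∀ θ y, 0 < h θ y) (hhm : ∀ θ, Measurable (h θ))
    (hint : ∀ θ, Integrable (h θ) ν)
    (hp : ∀ θ, 0 < p θ) (hq : ∀ θ θ', 0 < q θ θ') :
    ∀ θ θs : Θ,
      (p θ * h θ x / (∫ y, h θ y ∂ν)) * q θ θs *
          ∫ y, min 1 (p θs * h θs x * h θ y * q θs θ / (p θ * h θ x * h θs y * q θ θs))
            * (h θs y / (∫ y', h θs y' ∂ν)) ∂ν
        = (p θs * h θs x / (∫ y, h θs y ∂ν)) * q θs θ *
          ∫ y, min 1 (p θ * h θ x * h θs y * q θ θs / (p θs * h θs x * h θ y * q θs θ))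
            * (h θ y / (∫ y', h θ y' ∂ν)) ∂ν := by
  intro θ θs
  by_cases hν : ν = 0
  · subst hν; simp
  · have hZ : ∀ t : Θ, 0 < ∫ y, h t y ∂ν := by
      intro t
      rw [integral_pos_iff_support_of_nonneg (fun y => (hh t y).le) (hint t)]
      have : Function.support (h t) = Set.univ :=
        Set.eq_univ_of_forall fun y => (hh t y).ne'
      rw [this]
      simpa [pos_iff_ne_zero] using (Measure.measure_univ_ne_zero).2 hν
    have key : ∀ y : X,
        (p θ * h θ x / (∫ y, h θ y ∂ν)) * q θ θs *
          (min 1 (p θs * h θs x * h θ y * q θs θ / (p θ * h θ x * h θs y * q θ θs))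
            * (h θs y / (∫ y', h θs y' ∂ν)))
        = (p θs * h θs x / (∫ y, h θs y ∂ν)) * q θs θ *
          (min 1 (p θ * h θ x * h θs y * q θ θs / (p θs * h θs x * h θ y * q θs θ))
            * (h θ y / (∫ y', h θ y' ∂ν))) := by
      intro y
      have ha : (0:ℝ) < p θs * h θs x * h θ y * q θs θ :=
        mul_pos (mul_pos (mul_pos (hp θs) (hh θs x)) (hh θ y)) (hq θs θ)
      have hb : (0:ℝ) < p θ * h θ x * h θs y * q θ θs :=
        mul_pos (mul_pos (mul_pos (hp θ) (hh θ x)) (hh θs y)) (hq θ θs)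
      have h1 : (∫ y, h θ y ∂ν) ≠ 0 := (hZ θ).ne'
      have h2 : (∫ y', h θs y' ∂ν) ≠ 0 := (hZ θs).ne'
      rw [min_one_div_eq hb, min_one_div_eq ha, min_comm]
      field_simp
      field_simp [(hp θ).ne', (hp θs).ne', (hh θ x).ne', (hh θs x).ne', (hh θ y).ne', (hh θs y).ne', (hq θ θs).ne', (hq θs θ).ne']
    rw [← integral_const_mul, ← integral_const_mul]
    exact integral_congr_ae (Filter.Eventually.of_forall key)
end

section
/- With the setup of the exchange algorithm (strictly positive p, h, q; finite Z(θ) = ∫ h(θ,y) dν(y)), define the DA-AVM averaged acceptance α_DA(θ→θ*) = α₁(θ→θ*) · ∫_X α₂(θ, θ*, y) (h(θ*, y)/Z(θ*)) dν(y), where α₁(θ→θ*) = min{1, π̂(θ*) q(θ*,θ)/(π̂(θ) q(θ,θ*))} and α₂(θ, θ*, y) = min{1, [p(θ*) h(θ*, x) h(θ, y) π̂(θ)] / [p(θ) h(θ, x) h(θ*, y) π̂(θ*)]} for a strictly positive surrogate π̂. Then π(θ) q(θ, θ*) α_DA(θ→θ*) = π(θ*) q(θ*, θ) α_DA(θ*→θ),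 where π(θ) = p(θ) h(θ, x)/Z(θ). -/
open MeasureTheory

/-- Detailed balance of the delayed-acceptance auxiliary variable MCMC with respect to the
doubly intractable posterior `π(θ) = p(θ) h(θ, x) / Z(θ)`: the first-stage surrogate
screening `α₁` composed with the second-stage exchange correction `α₂`, averaged over the
auxiliary variable, is reversible with respect to `π`. Here `q θ θ'` denotes `q(θ' | θ)`
and `πhat` is the strictly positive surrogate. -/
theorem stmt_4 {Θ X : Type*} [MeasurableSpace X] (ν : Measure X)
    (h : Θ → X → ℝ) (p : Θ → ℝ) (q : Θ → Θ → ℝ) (πhat : Θ → ℝ) (x : X)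
    (hh : ∀ θ y, 0 < h θ y) (hhm : ∀ θ, Measurable (h θ))
    (hint : ∀ θ, Integrable (h θ) ν)
    (hp : ∀ θ, 0 < p θ) (hq : ∀ θ θ', 0 < q θ θ') (hπhat : ∀ θ, 0 < πhat θ) :
    ∀ θ θs : Θ,
      (p θ * h θ x / (∫ y, h θ y ∂ν)) * q θ θs *
          (min 1 (πhat θs * q θs θ / (πhat θ * q θ θs)) *
            ∫ y, min 1 (p θs * h θs x * h θ y * πhat θ / (p θ * h θ x * h θs y * πhat θs))
              * (h θs y / (∫ y', h θs y' ∂ν)) ∂ν)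
        = (p θs * h θs x / (∫ y, h θs y ∂ν)) * q θs θ *
          (min 1 (πhat θ * q θ θs / (πhat θs * q θs θ)) *
            ∫ y, min 1 (p θ * h θ x * h θs y * πhat θs / (p θs * h θs x * h θ y * πhat θ))
              * (h θ y / (∫ y', h θ y' ∂ν)) ∂ν) := by
  intro θ θs
  have key : ∀ a b : ℝ, 0 < a → min 1 (b / a) = min a b / a := by
    intro a b ha
    rw [← min_div_div_right ha.le, div_self ha.ne']
  set Z := ∫ y, h θ y ∂ν with hZ
  set Zs := ∫ y, h θs y ∂ν with hZs
  set u := p θ * h θ x with hu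
  set us := p θs * h θs x with hus
  set a := πhat θ with ha
  set as := πhat θs with has
  set k := q θ θs with hk
  set ks := q θs θ with hks
  have hu0 : 0 < u := mul_pos (hp θ) (hh θ x)
  have hus0 : 0 < us := mul_pos (hp θs) (hh θs x)
  have ha0 : 0 < a := hπhat θ
  have has0 : 0 < as := hπhat θs
  have hk0 : 0 < k := hq θ θs
  have hks0 : 0 < ks := hq θs θ
  -- pointwise identity for the first integral
  have point1 : ∀ y, min 1 (us * h θ y * a / (u * h θs y * as)) * (h θs y / Zs)
      = min (u * as * h θs y) (us * a * h θ y) / (u * as * Zs) := by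
    intro y
    have hys := hh θs y
    have hA : (0:ℝ) < u * as * h θs y := by positivity
    have e1 : us * h θ y * a = us * a * h θ y := by ring
    have e2 : u * h θs y * as = u * as * h θs y := by ring
    rw [e1, e2, key _ _ hA, div_mul_div_comm,
        show u * as * h θs y * Zs = u * as * Zs * h θs y by ring,
        mul_div_mul_right _ _ hys.ne']
  have point2 : ∀ y, min 1 (u * h θs y * as / (us * h θ y * a)) * (h θ y / Z)
      = min (us * a * h θ y) (u * as * h θs y) / (us * a * Z) := by
    intro y
    have hy := hh θ y
    have hA : (0:ℝ) < us * a * h θ y := by positivity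
    have e1 : u * h θs y * as = u * as * h θs y := by ring
    have e2 : us * h θ y * a = us * a * h θ y := by ring
    rw [e1, e2, key _ _ hA, div_mul_div_comm,
        show us * a * h θ y * Z = us * a * Z * h θ y by ring,
        mul_div_mul_right _ _ hy.ne']
  have int1 : (∫ y, min 1 (us * h θ y * a / (u * h θs y * as)) * (h θs y / Zs) ∂ν)
      = (∫ y, min (u * as * h θs y) (us * a * h θ y) ∂ν) / (u * as * Zs) := by
    rw [integral_congr_ae (Filter.Eventually.of_forall point1), integral_div]
  have int2 : (∫ y, min 1 (u * h θs y * as / (us * h θ y * a)) * (h θ y / Z) ∂ν)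
      = (∫ y, min (us * a * h θ y) (u * as * h θs y) ∂ν) / (us * a * Z) := by
    rw [integral_congr_ae (Filter.Eventually.of_forall point2), integral_div]
  have intsymm : (∫ y, min (us * a * h θ y) (u * as * h θs y) ∂ν)
      = (∫ y, min (u * as * h θs y) (us * a * h θ y) ∂ν) := by
    simp [min_comm]
  set I := ∫ y, min (u * as * h θs y) (us * a * h θ y) ∂ν with hI
  rw [int1, int2, intsymm, key _ _ (mul_pos ha0 hk0), key _ _ (mul_pos has0 hks0),
      min_comm (as * ks) (a * k)]
  rcases eq_or_ne Z 0 with hz | hz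
  · simp [hz]
  rcases eq_or_ne Zs 0 with hzs | hzs
  · simp [hzs]
  field_simp
end
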